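/- The number of meanders of length 2N (nonnegative ±1 paths starting at 0) with exactly k peaks and ending at a strictly positive position equals binomial(N+1,k)·binomial(N-1,k). -/

import Mathlib

/-- The value at time `i` of the Bernoulli path with `n` steps encoded by
`f : Fin n → Bool` (`true` = step `+1`, `false` = step `-1`), started at `0`. -/
def pathVal {n : ℕ} (f : Fin n → Bool) (i : ℕ) : ℤ :=
  ∑ j ∈ Finset.range i, (if h : j < n then (if f ⟨j, h⟩ then (1 : ℤ) else -1) else 0)

/-- `x` is a peak: `1 ≤ x ≤ n-1` and `S(x-1) = S(x+1) = S(x) - 1`. -/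
def IsPeak {n : ℕ} (f : Fin n → Bool) (x : ℕ) : Prop :=
  0 < x ∧ x < n ∧ pathVal f x = pathVal f (x - 1) + 1 ∧
    pathVal f (x + 1) = pathVal f x - 1

instance {n : ℕ} (f : Fin n → Bool) (x : ℕ) : Decidable (IsPeak f x) := by
  unfold IsPeak; infer_instance

/-- Number of peaks of the path encoded by `f`. -/
def numPeaks {n : ℕ} (f : Fin n → Bool) : ℕ :=
  ((Finset.range n).filter (fun x => IsPeak f x)).card

/-- Integer binomial coefficient with the convention that it vanishes unless
`0 ≤ p ≤ m`. -/
def ichoose (m p : ℤ) : ℤ :=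
  if 0 ≤ m ∧ 0 ≤ p then ((m.toNat).choose p.toNat : ℤ) else 0

/-- `hchoose num p = binomial (num/2 - 1) p`, with the convention that it
vanishes when `num` is odd (non-integer upper argument) or when the arguments
are out of range. -/
def hchoose (num p : ℤ) : ℤ :=
  if 2 ∣ num then ichoose (num / 2 - 1) p else 0

/-- `G(l,j₁,j₂,x,y) = binomial((l+y-x)/2 - 1, j₁) · binomial((l-y+x)/2 - 1, j₂)`. -/
def G (l j1 j2 x y : ℤ) : ℤ := hchoose (l + y - x) j1 * hchoose (l - y + x) j2

/-- The path stays nonnegative on `[0, n]`. -/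
def IsNonneg {n : ℕ} (f : Fin n → Bool) : Prop :=
  ∀ i ∈ Finset.range (n + 1), 0 ≤ pathVal f i

instance {n : ℕ} (f : Fin n → Bool) : Decidable (IsNonneg f) := by
  unfold IsNonneg; infer_instance

/-! ### basics -/

lemma pathVal_zero {n : ℕ} (f : Fin n → Bool) : pathVal f 0 = 0 := by
  simp [pathVal]

lemma pathVal_succ {n : ℕ} (f : Fin n → Bool) (i : ℕ) (h : i < n) :
    pathVal f (i + 1) = pathVal f i + (if f ⟨i, h⟩ then 1 else -1) := by
  rw [pathVal, Finset.sum_range_succ, dif_pos h]; rfl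

lemma pathVal_le {n : ℕ} (f : Fin n → Bool) (i : ℕ) : pathVal f i ≤ i := by
  calc pathVal f i ≤ ∑ _j ∈ Finset.range i, (1 : ℤ) := by
        apply Finset.sum_le_sum
        intro j _
        split_ifs <;> norm_num
    _ = i := by simp

/-! ### snoc lemmas -/

lemma pathVal_snoc {n : ℕ} (g : Fin n → Bool) (b : Bool) (i : ℕ) (h : i ≤ n) :
    pathVal (Fin.snoc g b) i = pathVal g i := by
  unfold pathVal
  apply Finset.sum_congr rfl
  intro j hj
  have hj' : j < n := lt_of_lt_of_le (Finset.mem_range.1 hj) h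
  rw [dif_pos hj', dif_pos (Nat.lt_succ_of_lt hj')]
  congr 1
  have : (⟨j, Nat.lt_succ_of_lt hj'⟩ : Fin (n+1)) = Fin.castSucc ⟨j, hj'⟩ := rfl
  rw [this, Fin.snoc_castSucc]

lemma pathVal_snoc_top {n : ℕ} (g : Fin n → Bool) (b : Bool) :
    pathVal (Fin.snoc g b) (n + 1) = pathVal g n + (if b then 1 else -1) := by
  rw [pathVal_succ (Fin.snoc g b) n (Nat.lt_succ_self n), pathVal_snoc g b n le_rfl]
  congr 2
  have : (⟨n, Nat.lt_succ_self n⟩ : Fin (n+1)) = Fin.last n := rfl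
  rw [this, Fin.snoc_last]

lemma isNonneg_snoc {n : ℕ} (g : Fin n → Bool) (b : Bool) :
    IsNonneg (Fin.snoc g b) ↔
      IsNonneg g ∧ 0 ≤ pathVal g n + (if b then 1 else -1) := by
  constructor
  · intro h
    refine ⟨fun i hi => ?_, ?_⟩
    · have hi' : i ≤ n := by simpa [Nat.lt_succ_iff] using hi
      have := h i (Finset.mem_range.2 (by omega))
      rwa [pathVal_snoc g b i hi'] at this
    · have := h (n+1) (Finset.mem_range.2 (by omega))
      rwa [pathVal_snoc_top] at this
  · rintro ⟨h1, h2⟩ i hi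
    have hi' : i ≤ n + 1 := by simpa [Nat.lt_succ_iff] using hi
    rcases Nat.lt_or_ge i (n+1) with h | h
    · rw [pathVal_snoc g b i (by omega)]
      exact h1 i (Finset.mem_range.2 (by omega))
    · have : i = n + 1 := by omega
      rw [this, pathVal_snoc_top]; exact h2

lemma isPeak_snoc_lt {n : ℕ} (g : Fin n → Bool) (b : Bool) (x : ℕ) (hx : x < n) :
    IsPeak (Fin.snoc g b) x ↔ IsPeak g x := by
  unfold IsPeak
  rw [pathVal_snoc g b x (by omega), pathVal_snoc g b (x-1) (by omega),
    pathVal_snoc g b (x+1) (by omega)]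
  constructor
  · rintro ⟨h1, _, h3, h4⟩; exact ⟨h1, hx, h3, h4⟩
  · rintro ⟨h1, _, h3, h4⟩; exact ⟨h1, by omega, h3, h4⟩

lemma isPeak_snoc_top {n : ℕ} (g : Fin n → Bool) (b : Bool) :
    IsPeak (Fin.snoc g b) n ↔ (pathVal g n = pathVal g (n-1) + 1 ∧ b = false) := by
  unfold IsPeak
  rw [pathVal_snoc g b n le_rfl, pathVal_snoc g b (n-1) (by omega), pathVal_snoc_top]
  constructor
  · rintro ⟨h1, _, h3, h4⟩
    refine ⟨h3, ?_⟩
    cases b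
    · rfl
    · exfalso; simp at h4; omega
  · rintro ⟨h3, hb⟩
    subst hb
    have hn : 0 < n := by
      by_contra h
      have : n = 0 := by omega
      subst this
      simp at h3
    exact ⟨hn, Nat.lt_succ_self n, h3, by simp [sub_eq_add_neg]⟩

lemma numPeaks_snoc {n : ℕ} (g : Fin n → Bool) (b : Bool) :
    numPeaks (Fin.snoc g b) =
      numPeaks g + (if pathVal g n = pathVal g (n-1) + 1 ∧ b = false then 1 else 0) := by
  unfold numPeaks
  rw [Finset.range_add_one, Finset.filter_insert]
  have hcong : (Finset.range n).filter (fun x => IsPeak (Fin.snoc g b) x)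
      = (Finset.range n).filter (fun x => IsPeak g x) := by
    apply Finset.filter_congr
    intro x hx
    simpa using isPeak_snoc_lt g b x (Finset.mem_range.1 hx)
  by_cases hp : IsPeak (Fin.snoc g b) n
  · rw [if_pos hp, Finset.card_insert_of_notMem (by simp), hcong,
      if_pos ((isPeak_snoc_top g b).1 hp)]
  · rw [if_neg hp, hcong, if_neg (fun h => hp ((isPeak_snoc_top g b).2 h))]
    simp

/-! ### counting -/

def cntA (n : ℕ) (y : ℤ) (k : ℕ) : ℕ :=
  (Finset.univ.filter (fun f : Fin n → Bool =>
    IsNonneg f ∧ pathVal f n = y ∧ numPeaks f = k ∧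
      pathVal f n = pathVal f (n-1) + 1)).card

def cntB (n : ℕ) (y : ℤ) (k : ℕ) : ℕ :=
  (Finset.univ.filter (fun f : Fin n → Bool =>
    IsNonneg f ∧ pathVal f n = y ∧ numPeaks f = k ∧
      ¬(pathVal f n = pathVal f (n-1) + 1))).card

lemma cnt_split (n : ℕ) (y : ℤ) (k : ℕ) :
    (Finset.univ.filter (fun f : Fin n → Bool =>
      IsNonneg f ∧ pathVal f n = y ∧ numPeaks f = k)).card = cntA n y k + cntB n y k := by
  unfold cntA cntB
  rw [← Finset.card_filter_add_card_filter_not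
    (p := fun f : Fin n → Bool => pathVal f n = pathVal f (n-1) + 1),
    Finset.filter_filter, Finset.filter_filter]
  congr 1
  · apply congrArg Finset.card
    apply Finset.filter_congr
    intro x _
    tauto
  · apply congrArg Finset.card
    apply Finset.filter_congr
    intro x _
    tauto

lemma card_filter_succ {n : ℕ} (P : (Fin (n+1) → Bool) → Prop) [DecidablePred P] :
    (Finset.univ.filter P).card
      = (Finset.univ.filter (fun g : Fin n → Bool => P (Fin.snoc g true))).card
      + (Finset.univ.filter (fun g : Fin n → Bool => P (Fin.snoc g false))).card := by
  classical
  rw [Finset.card_filter, Finset.card_filter, Finset.card_filter]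
  rw [← Fintype.sum_equiv (Fin.snocEquiv (fun _ => Bool))
    (fun p => if P (Fin.snoc p.2 p.1) then 1 else 0)
    (fun f => if P f then 1 else 0) (fun p => by simp [Fin.snocEquiv]; rfl)]
  rw [Fintype.sum_prod_type, Fintype.sum_bool]

lemma lastUp_snoc {n : ℕ} (g : Fin n → Bool) (b : Bool) :
    (pathVal (Fin.snoc g b) (n+1) = pathVal (Fin.snoc g b) ((n+1)-1) + 1) ↔ b = true := by
  rw [Nat.add_sub_cancel, pathVal_snoc_top, pathVal_snoc g b n le_rfl]
  cases b <;> simp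

lemma recA (n : ℕ) (y : ℤ) (k : ℕ) (hy : 0 ≤ y) :
    cntA (n+1) y k = cntA n (y-1) k + cntB n (y-1) k := by
  rw [← cnt_split, cntA, card_filter_succ]
  have h2 : (Finset.univ.filter (fun g : Fin n → Bool =>
      IsNonneg (Fin.snoc g false) ∧ pathVal (Fin.snoc g false) (n+1) = y ∧
      numPeaks (Fin.snoc g false) = k ∧
      pathVal (Fin.snoc g false) (n+1) = pathVal (Fin.snoc g false) ((n+1)-1) + 1)) = ∅ := by
    rw [Finset.filter_eq_empty_iff]
    intro g _
    rintro ⟨-, -, -, h4⟩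
    rw [lastUp_snoc] at h4
    simp at h4
  rw [h2, Finset.card_empty, Nat.add_zero]
  apply congrArg Finset.card
  apply Finset.filter_congr
  intro g _
  rw [isNonneg_snoc, lastUp_snoc, pathVal_snoc_top, numPeaks_snoc,
    show (if true = true then (1:ℤ) else -1) = 1 from rfl,
    if_neg (show ¬(pathVal g n = pathVal g (n-1) + 1 ∧ true = false) from by simp)]
  constructor
  · rintro ⟨⟨h1, -⟩, h2, h3, -⟩
    exact ⟨h1, by omega, by omega⟩
  · rintro ⟨h1, h2, h3⟩
    exact ⟨⟨h1, by omega⟩, by omega, by omega, rfl⟩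

lemma recB (n : ℕ) (y : ℤ) (k : ℕ) (hy : 0 ≤ y) :
    cntB (n+1) y (k+1) = cntA n (y+1) k + cntB n (y+1) (k+1) := by
  rw [cntB, card_filter_succ]
  have h1 : (Finset.univ.filter (fun g : Fin n → Bool =>
      IsNonneg (Fin.snoc g true) ∧ pathVal (Fin.snoc g true) (n+1) = y ∧
      numPeaks (Fin.snoc g true) = (k+1) ∧
      ¬(pathVal (Fin.snoc g true) (n+1) = pathVal (Fin.snoc g true) ((n+1)-1) + 1))) = ∅ := by
    rw [Finset.filter_eq_empty_iff]
    intro g _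
    rintro ⟨-, -, -, h4⟩
    rw [lastUp_snoc] at h4
    simp at h4
  rw [h1, Finset.card_empty, Nat.zero_add]
  rw [cntA, cntB,
    ← Finset.card_filter_add_card_filter_not
      (s := Finset.univ.filter (fun g : Fin n → Bool =>
        IsNonneg (Fin.snoc g false) ∧ pathVal (Fin.snoc g false) (n+1) = y ∧
        numPeaks (Fin.snoc g false) = (k+1) ∧
        ¬(pathVal (Fin.snoc g false) (n+1) = pathVal (Fin.snoc g false) ((n+1)-1) + 1)))
      (p := fun g : Fin n → Bool => pathVal g n = pathVal g (n-1) + 1),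
    Finset.filter_filter, Finset.filter_filter]
  congr 1
  · apply congrArg Finset.card
    apply Finset.filter_congr
    intro g _
    rw [isNonneg_snoc, lastUp_snoc, pathVal_snoc_top, numPeaks_snoc,
      show (if false = true then (1:ℤ) else -1) = -1 from rfl]
    constructor
    · rintro ⟨⟨⟨h1, h1'⟩, h2, h3, -⟩, h5⟩
      rw [if_pos ⟨h5, rfl⟩] at h3
      exact ⟨h1, by omega, by omega, h5⟩
    · rintro ⟨h1, h2, h3, h5⟩
      refine ⟨⟨⟨h1, by omega⟩, by omega, ?_, by simp⟩, h5⟩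
      rw [if_pos ⟨h5, rfl⟩]
      omega
  · apply congrArg Finset.card
    apply Finset.filter_congr
    intro g _
    rw [isNonneg_snoc, lastUp_snoc, pathVal_snoc_top, numPeaks_snoc,
      show (if false = true then (1:ℤ) else -1) = -1 from rfl]
    constructor
    · rintro ⟨⟨⟨h1, h1'⟩, h2, h3, -⟩, h5⟩
      rw [if_neg (by tauto)] at h3
      exact ⟨h1, by omega, by omega, h5⟩
    · rintro ⟨h1, h2, h3, h5⟩
      refine ⟨⟨⟨h1, by omega⟩, by omega, ?_, by simp⟩, h5⟩
      rw [if_neg (by tauto)]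
      omega

lemma recB0 (n : ℕ) (y : ℤ) (hy : 0 ≤ y) :
    cntB (n+1) y 0 = cntB n (y+1) 0 := by
  rw [cntB, card_filter_succ]
  have h1 : (Finset.univ.filter (fun g : Fin n → Bool =>
      IsNonneg (Fin.snoc g true) ∧ pathVal (Fin.snoc g true) (n+1) = y ∧
      numPeaks (Fin.snoc g true) = 0 ∧
      ¬(pathVal (Fin.snoc g true) (n+1) = pathVal (Fin.snoc g true) ((n+1)-1) + 1))) = ∅ := by
    rw [Finset.filter_eq_empty_iff]
    intro g _
    rintro ⟨-, -, -, h4⟩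
    rw [lastUp_snoc] at h4
    simp at h4
  rw [h1, Finset.card_empty, Nat.zero_add, cntB]
  apply congrArg Finset.card
  apply Finset.filter_congr
  intro g _
  rw [isNonneg_snoc, lastUp_snoc, pathVal_snoc_top, numPeaks_snoc,
    show (if false = true then (1:ℤ) else -1) = -1 from rfl]
  constructor
  · rintro ⟨⟨h1, h1'⟩, h2, h3, -⟩
    have h5 : ¬(pathVal g n = pathVal g (n-1) + 1) := by
      intro h5
      rw [if_pos ⟨h5, rfl⟩] at h3
      omega
    rw [if_neg (by tauto)] at h3
    exact ⟨h1, by omega, by omega, h5⟩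
  · rintro ⟨h1, h2, h3, h5⟩
    refine ⟨⟨h1, by omega⟩, by omega, ?_, by simp⟩
    rw [if_neg (by tauto)]
    omega

/-! ### arithmetic -/

lemma ichoose_neg {m p : ℤ} (h : m < 0) : ichoose m p = 0 := by
  rw [ichoose, if_neg]
  rintro ⟨h1, -⟩
  omega

lemma hchoose_not_dvd {s p : ℤ} (h : ¬ (2 ∣ s)) : hchoose s p = 0 := by
  rw [hchoose, if_neg h]

lemma hchoose_eq_zero {s p : ℤ} (h : s ≤ 1) : hchoose s p = 0 := by
  rw [hchoose]
  split_ifs with h2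
  · exact ichoose_neg (by omega)
  · rfl

lemma ichoose_succ (m : ℤ) (k : ℕ) :
    ichoose (m+1) ((k:ℤ)+1) = ichoose m ((k:ℤ)+1) + ichoose m (k:ℤ) := by
  rcases lt_trichotomy m (-1) with h | h | h
  · rw [ichoose_neg (by omega), ichoose_neg (by omega), ichoose_neg (by omega)]
    ring
  · rw [ichoose_neg (show m < 0 from by omega), ichoose_neg (show m < 0 from by omega),
      show m+1 = (0:ℤ) from by omega, ichoose, if_pos ⟨le_refl 0, by omega⟩,
      show ((0:ℤ)).toNat = 0 from rfl, show ((k:ℤ)+1).toNat = k+1 from by omega]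
    simp
  · have hm : (m+1).toNat = m.toNat + 1 := by omega
    have hk : ((k:ℤ)+1).toNat = k + 1 := by omega
    have hk2 : ((k:ℤ)).toNat = k := by omega
    rw [ichoose, ichoose, ichoose, if_pos ⟨by omega, by omega⟩,
      if_pos ⟨by omega, by omega⟩, if_pos ⟨by omega, by omega⟩, hm, hk, hk2]
    rw [Nat.choose_succ_succ]
    push_cast
    ring

lemma hchoose_succ (s : ℤ) (k : ℕ) :
    hchoose (s+2) ((k:ℤ)+1) = hchoose s ((k:ℤ)+1) + hchoose s (k:ℤ) := by
  by_cases h : (2:ℤ) ∣ s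
  · rw [hchoose, hchoose, hchoose, if_pos (by omega), if_pos h, if_pos h,
      show (s+2)/2 - 1 = (s/2 - 1) + 1 from by omega]
    exact ichoose_succ (s/2 - 1) k
  · rw [hchoose_not_dvd (by omega), hchoose_not_dvd h, hchoose_not_dvd h]
    ring

lemma hchoose_k0 {s : ℤ} (h2 : (2:ℤ) ∣ s) (hs : 2 ≤ s) : hchoose s 0 = 1 := by
  rw [hchoose, if_pos h2, ichoose, if_pos ⟨by omega, le_refl 0⟩]
  simp

/-! ### closed forms -/

def fA (n y : ℤ) (k : ℕ) : ℤ :=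
  hchoose (n+y) (k:ℤ) * hchoose (n-y+2) (k:ℤ) - hchoose (n+y+2) (k:ℤ) * hchoose (n-y) (k:ℤ)

def fB (n y : ℤ) (k : ℕ) : ℤ :=
  hchoose (n+y+2) (k:ℤ) * hchoose (n-y+2) (k:ℤ) - hchoose (n+y+4) (k:ℤ) * hchoose (n-y) (k:ℤ)
    - fA n y k

lemma fA_zero (n : ℤ) (k : ℕ) : fA n 0 k = 0 := by
  simp only [fA]
  rw [show n+0+2 = n-0+2 from by ring, show n+0 = n-0 from by ring]
  ring

lemma fA_step (n y : ℤ) (k : ℕ) : fA (n+1) y k = fA n (y-1) k + fB n (y-1) k := by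
  simp only [fA, fB]
  rw [show n+1+y+2 = n+(y-1)+4 from by ring, show n+1+y = n+(y-1)+2 from by ring,
    show n+1-y+2 = n-(y-1)+2 from by ring, show n+1-y = n-(y-1) from by ring]
  ring

lemma fB_step (n y : ℤ) (k : ℕ) :
    fB (n+1) y (k+1) = fA n (y+1) k + fB n (y+1) (k+1) := by
  simp only [fA, fB]
  push_cast
  rw [show n+1+y+4 = (n+y+3)+2 from by ring, show n+1+y+2 = n+y+3 from by ring,
    show n+1+y = n+y+1 from by ring,
    show n+1-y+2 = (n-y+1)+2 from by ring, show n+1-y = n-y+1 from by ring,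
    show n+(y+1)+4 = (n+y+3)+2 from by ring, show n+(y+1)+2 = n+y+3 from by ring,
    show n+(y+1) = n+y+1 from by ring,
    show n-(y+1)+2 = n-y+1 from by ring, show n-(y+1) = (n-y-1) from by ring]
  have P1 : hchoose ((n+y+1)+2) ((k:ℤ)+1) = hchoose (n+y+1) ((k:ℤ)+1) + hchoose (n+y+1) (k:ℤ) :=
    hchoose_succ _ k
  have P2 : hchoose ((n+y+3)+2) ((k:ℤ)+1) = hchoose (n+y+3) ((k:ℤ)+1) + hchoose (n+y+3) (k:ℤ) :=
    hchoose_succ _ k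
  have P3 : hchoose ((n-y+1)+2) ((k:ℤ)+1) = hchoose (n-y+1) ((k:ℤ)+1) + hchoose (n-y+1) (k:ℤ) :=
    hchoose_succ _ k
  have P4 : hchoose ((n-y-1)+2) ((k:ℤ)+1) = hchoose (n-y-1) ((k:ℤ)+1) + hchoose (n-y-1) (k:ℤ) :=
    hchoose_succ _ k
  have P5 : hchoose (n-y+1) ((k:ℤ)+1) = hchoose (n-y-1) ((k:ℤ)+1) + hchoose (n-y-1) (k:ℤ) := by
    rw [show n-y+1 = (n-y-1)+2 from by ring]
    exact hchoose_succ _ k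
  have P6 : hchoose (n+y+3) ((k:ℤ)+1) = hchoose (n+y+1) ((k:ℤ)+1) + hchoose (n+y+1) (k:ℤ) := by
    rw [show n+y+3 = (n+y+1)+2 from by ring]
    exact hchoose_succ _ k
  rw [P2, P3, P5, P6]
  ring

lemma fB_step0 (n y : ℤ) (hn : 0 ≤ n) (hy : 0 ≤ y) :
    fB (n+1) y 0 = fB n (y+1) 0 := by
  simp only [fA, fB]
  push_cast
  rw [show n+1+y+4 = n+y+5 from by ring, show n+1+y+2 = n+y+3 from by ring,
    show n+1+y = n+y+1 from by ring,
    show n+1-y+2 = n-y+3 from by ring, show n+1-y = n-y+1 from by ring,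
    show n+(y+1)+4 = n+y+5 from by ring, show n+(y+1)+2 = n+y+3 from by ring,
    show n+(y+1) = n+y+1 from by ring,
    show n-(y+1)+2 = n-y+1 from by ring, show n-(y+1) = n-y-1 from by ring]
  by_cases hpar : (2:ℤ) ∣ (n+y)
  · rw [hchoose_not_dvd (s := n+y+1) (by omega), hchoose_not_dvd (s := n+y+3) (by omega),
      hchoose_not_dvd (s := n+y+5) (by omega)]
    ring
  · rw [hchoose_k0 (s := n+y+1) (by omega) (by omega),
      hchoose_k0 (s := n+y+3) (by omega) (by omega),
      hchoose_k0 (s := n+y+5) (by omega) (by omega)]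
    ring

lemma isNonneg_last {n : ℕ} {f : Fin n → Bool} (h : IsNonneg f) : 0 ≤ pathVal f n :=
  h n (Finset.mem_range.2 (Nat.lt_succ_self n))

lemma cntA_neg (n : ℕ) (y : ℤ) (k : ℕ) (hy : y < 0) : cntA n y k = 0 := by
  rw [cntA, Finset.card_eq_zero, Finset.filter_eq_empty_iff]
  rintro f - ⟨h1, h2, -, -⟩
  have := isNonneg_last h1
  omega

lemma cntB_neg (n : ℕ) (y : ℤ) (k : ℕ) (hy : y < 0) : cntB n y k = 0 := by
  rw [cntB, Finset.card_eq_zero, Finset.filter_eq_empty_iff]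
  rintro f - ⟨h1, h2, -, -⟩
  have := isNonneg_last h1
  omega

lemma pathVal_fin_zero (f : Fin 0 → Bool) (i : ℕ) : pathVal f i = 0 := by
  unfold pathVal
  apply Finset.sum_eq_zero
  intro j _
  rw [dif_neg (by omega)]

/-! ### the main induction -/

lemma closed_form (n : ℕ) :
    ∀ y : ℤ, 0 ≤ y → ∀ k : ℕ,
      ((cntA n y k : ℤ) = fA n y k ∧ (cntB n y k : ℤ) = fB n y k) := by
  induction n with
  | zero =>
    intro y hy k
    constructor
    · have hA : cntA 0 y k = 0 := by
        rw [cntA, Finset.card_eq_zero, Finset.filter_eq_empty_iff]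
        rintro f - ⟨-, -, -, h4⟩
        simp [pathVal_fin_zero] at h4
      rw [hA]
      push_cast
      rcases eq_or_lt_of_le hy with h | h
      · rw [← h, fA_zero]
      · simp only [fA]
        rw [hchoose_eq_zero (s := (0:ℤ)-y+2) (by omega),
          hchoose_eq_zero (s := (0:ℤ)-y) (by omega)]
        ring
    · rcases eq_or_lt_of_le hy with h | h
      · rw [← h]
        have hB : cntB 0 0 k = if k = 0 then 1 else 0 := by
          rw [cntB]
          by_cases hk : k = 0
          · subst hk
            rw [if_pos rfl, Finset.filter_true_of_mem, Finset.card_univ]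
            · simp
            · intro f _
              refine ⟨?_, pathVal_fin_zero f 0, ?_, ?_⟩
              · intro i _
                rw [pathVal_fin_zero]
              · rw [numPeaks]
                simp
              · simp [pathVal_fin_zero]
          · rw [if_neg hk, Finset.card_eq_zero, Finset.filter_eq_empty_iff]
            rintro f - ⟨-, -, h3, -⟩
            apply hk
            rw [← h3, numPeaks]
            simp
        rw [hB]
        have h3 : ichoose 0 (k:ℤ) = if k = 0 then 1 else 0 := by
          rw [ichoose, if_pos ⟨le_refl 0, by omega⟩, show ((0:ℤ)).toNat = 0 from rfl,
            show ((k:ℤ)).toNat = k from by omega]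
          cases k
          · simp
          · simp
        simp only [fB, fA]
        push_cast
        have h2 : hchoose (2:ℤ) (k:ℤ) = ichoose 0 (k:ℤ) := by
          rw [hchoose, if_pos (by omega)]
          norm_num
        rw [hchoose_eq_zero (s := (0:ℤ)) (by omega), h2, h3]
        split_ifs <;> norm_num
      · have hB : cntB 0 y k = 0 := by
          rw [cntB, Finset.card_eq_zero, Finset.filter_eq_empty_iff]
          rintro f - ⟨-, h2, -, -⟩
          rw [pathVal_fin_zero] at h2
          omega
        rw [hB]
        simp only [fB, fA]
        push_cast
        rw [hchoose_eq_zero (s := (0:ℤ)-y+2) (by omega),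
          hchoose_eq_zero (s := (0:ℤ)-y) (by omega)]
        ring
  | succ n ih =>
    intro y hy k
    constructor
    · rcases eq_or_lt_of_le hy with h | h
      · rw [recA n y k hy, ← h, cntA_neg n (0-1) k (by omega), cntB_neg n (0-1) k (by omega)]
        push_cast
        rw [fA_zero]
      · rw [recA n y k hy]
        obtain ⟨hA, hB⟩ := ih (y-1) (by omega) k
        push_cast
        rw [hA, hB, ← fA_step]
    · rcases k with _ | k
      · rw [recB0 n y hy]
        have hB := (ih (y+1) (by omega) 0).2
        push_cast
        push_cast at hB
        rw [hB, ← fB_step0 _ _ (by positivity) hy]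
      · rw [recB n y k hy]
        obtain ⟨hA, -⟩ := ih (y+1) (by omega) k
        obtain ⟨-, hB⟩ := ih (y+1) (by omega) (k+1)
        push_cast
        rw [hA, hB, ← fB_step]

lemma tele (F : ℕ → ℤ) (m : ℕ) :
    ∑ j ∈ Finset.range m, (F (j+1) - F (j+3)) = F 1 + F 2 - F (m+1) - F (m+2) := by
  induction m with
  | zero => simp
  | succ m ih =>
    rw [Finset.sum_range_succ, ih, show m+1+1 = m+2 from rfl, show m+1+2 = m+3 from rfl]
    ring

/-- The number of meanders of length `2N` with exactly `k` peaks ending at a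
strictly positive position is `binomial(N+1,k) · binomial(N-1,k)` (the latter
factor vanishing when `N - 1 < 0`). -/
theorem card_positive_meanders_even (N k : ℕ) :
    (((Finset.univ : Finset (Fin (2 * N) → Bool)).filter
        (fun f => IsNonneg f ∧ 0 < pathVal f (2 * N) ∧ numPeaks f = k)).card : ℤ)
      = ichoose ((N : ℤ) + 1) k * ichoose ((N : ℤ) - 1) k := by
  have hmaps : ∀ f ∈ (Finset.univ : Finset (Fin (2 * N) → Bool)).filter
      (fun f => IsNonneg f ∧ 0 < pathVal f (2 * N) ∧ numPeaks f = k),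
      (pathVal f (2 * N)).toNat - 1 ∈ Finset.range (2 * N) := by
    intro f hf
    obtain ⟨-, h2, -⟩ := (Finset.mem_filter.1 hf).2
    have h3 := pathVal_le f (2 * N)
    rw [Finset.mem_range]
    omega
  rw [Finset.card_eq_sum_card_fiberwise hmaps]
  have hfib : ∀ y ∈ Finset.range (2 * N),
      ((((Finset.univ : Finset (Fin (2 * N) → Bool)).filter
        (fun f => IsNonneg f ∧ 0 < pathVal f (2 * N) ∧ numPeaks f = k)).filter
        (fun f => (pathVal f (2 * N)).toNat - 1 = y)).card : ℤ)
      = fA (2*N) ((y:ℤ)+1) k + fB (2*N) ((y:ℤ)+1) k := by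
    intro y _
    have hcard : (((Finset.univ : Finset (Fin (2 * N) → Bool)).filter
        (fun f => IsNonneg f ∧ 0 < pathVal f (2 * N) ∧ numPeaks f = k)).filter
        (fun f => (pathVal f (2 * N)).toNat - 1 = y)).card
        = cntA (2*N) ((y:ℤ)+1) k + cntB (2*N) ((y:ℤ)+1) k := by
      rw [Finset.filter_filter, ← cnt_split]
      apply congrArg Finset.card
      apply Finset.filter_congr
      intro f _
      constructor
      · rintro ⟨⟨h1, h2, h3⟩, h4⟩
        exact ⟨h1, by omega, h3⟩
      · rintro ⟨h1, h2, h3⟩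
        exact ⟨⟨h1, by omega, h3⟩, by omega⟩
    rw [hcard]
    obtain ⟨cA, cB⟩ := closed_form (2*N) ((y:ℤ)+1) (by positivity) k
    push_cast
    push_cast at cA cB
    rw [cA, cB]
  push_cast
  rw [Finset.sum_congr rfl hfib]
  set F : ℕ → ℤ := fun j => hchoose (2*(N:ℤ) + j + 2) (k:ℤ) * hchoose (2*(N:ℤ) - j + 2) (k:ℤ)
    with hF
  have hterm : ∀ y ∈ Finset.range (2*N),
      fA (2*N) ((y:ℤ)+1) k + fB (2*N) ((y:ℤ)+1) k = F (y+1) - F (y+3) := by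
    intro y _
    simp only [fA, fB, hF]
    push_cast
    rw [show 2*(N:ℤ) + (y+1) + 4 = 2*(N:ℤ) + (y+3) + 2 from by ring,
      show 2*(N:ℤ) - (y+1) = 2*(N:ℤ) - (y+3) + 2 from by ring]
    ring
  rw [Finset.sum_congr rfl hterm, tele F (2*N)]
  have h1 : F 1 = 0 := by
    simp only [hF]
    rw [hchoose_not_dvd (s := 2*(N:ℤ) + (1:ℕ) + 2) (by push_cast; omega)]
    ring
  have h2 : F (2*N+1) = 0 := by
    simp only [hF]
    rw [hchoose_not_dvd (s := 2*(N:ℤ) + ((2*N+1:ℕ):ℤ) + 2) (by push_cast; omega)]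
    ring
  have h3 : F (2*N+2) = 0 := by
    simp only [hF]
    rw [hchoose_eq_zero (s := 2*(N:ℤ) - ((2*N+2:ℕ):ℤ) + 2) (by push_cast; omega)]
    ring
  have h4 : F 2 = ichoose ((N : ℤ) + 1) k * ichoose ((N : ℤ) - 1) k := by
    simp only [hF]
    push_cast
    rw [show 2*(N:ℤ) + 2 + 2 = 2*((N:ℤ)+2) from by ring,
      show 2*(N:ℤ) - 2 + 2 = 2*(N:ℤ) from by ring]
    rw [hchoose, if_pos ⟨(N:ℤ)+2, by ring⟩, hchoose, if_pos ⟨(N:ℤ), by ring⟩]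
    rw [show (2*((N:ℤ)+2))/2 - 1 = (N:ℤ)+1 from by omega,
      show (2*(N:ℤ))/2 - 1 = (N:ℤ)-1 from by omega]
  rw [h1, h2, h3, h4]
  ring
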